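/- For every finite simple graph G without isolated edges (no connected component of G is a single edge) and with at least one edge, the inequalities χ'_sCF(G) ≤ χ'_CF(G) ≤ χ'_sCF(G) + 1 hold. -/

import Mathlib

open SimpleGraph

/-- An edge `e` is *satisfied* by the colouring `c` of (the edges of) the graph `H` if some
colour is assigned by `c` to exactly one edge of `H` incident to an endpoint of `e`. -/
def CFSatisfies {V : Type*} {k : ℕ} (H : SimpleGraph V) (c : Sym2 V → Fin k) (e : Sym2 V) :
    Prop :=
  ∃ col : Fin k, ∃! f : Sym2 V, f ∈ H.edgeSet ∧ (∃ x ∈ e, x ∈ f) ∧ c f = col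

/-- The conflict-free chromatic index `χ'_CF(G)`: the least `k` such that `G` admits an edge
colouring with `k` colours in which every edge of `G` is satisfied. -/
noncomputable def cfChromIndex {V : Type*} (G : SimpleGraph V) : ℕ :=
  sInf {k | ∃ c : Sym2 V → Fin k, ∀ e ∈ G.edgeSet, CFSatisfies G c e}

/-- The parameter `χ'_sCF(G)`: the least `k` for which some subgraph `H` of `G` admits an edge
colouring with `k` colours such that every edge of `G` is satisfied. -/
noncomputable def scfChromIndex {V : Type*} (G : SimpleGraph V) : ℕ :=
  sInf {k | ∃ H : SimpleGraph V, H ≤ G ∧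
    ∃ c : Sym2 V → Fin k, ∀ e ∈ G.edgeSet, CFSatisfies H c e}

/-- For every finite simple graph without isolated edges and with at least one edge,
`χ'_sCF(G) ≤ χ'_CF(G) ≤ χ'_sCF(G) + 1`. -/
theorem scf_le_cf_le_scf_add_one {V : Type*} [Fintype V] (G : SimpleGraph V)
    [DecidableRel G.Adj] (hE : G.edgeSet.Nonempty)
    (hNoIsolatedEdge : ∀ u v : V, G.Adj u v → 2 ≤ G.degree u ∨ 2 ≤ G.degree v) :
    scfChromIndex G ≤ cfChromIndex G ∧ cfChromIndex G ≤ scfChromIndex G + 1 := by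
  classical
  set cfS := {k | ∃ c : Sym2 V → Fin k, ∀ e ∈ G.edgeSet, CFSatisfies G c e} with hcfS
  set scfS := {k | ∃ H : SimpleGraph V, H ≤ G ∧
    ∃ c : Sym2 V → Fin k, ∀ e ∈ G.edgeSet, CFSatisfies H c e} with hscfS
  have hcf_ne : cfS.Nonempty := by
    refine ⟨Fintype.card (Sym2 V), fun f => Fintype.equivFin (Sym2 V) f, ?_⟩
    intro e he
    refine ⟨Fintype.equivFin (Sym2 V) e, e, ⟨he, ?_, rfl⟩, ?_⟩
    · obtain ⟨x, y⟩ := e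
      exact ⟨x, Sym2.mem_mk_left x y, Sym2.mem_mk_left x y⟩
    · rintro f ⟨_, _, hf⟩
      exact (Fintype.equivFin (Sym2 V)).injective hf
  have hsubset : cfS ⊆ scfS := by
    rintro k ⟨c, hc⟩
    exact ⟨G, le_refl G, c, hc⟩
  have hscf_ne : scfS.Nonempty := ⟨_, hsubset hcf_ne.choose_spec⟩
  constructor
  · exact csInf_le_csInf (OrderBot.bddBelow _) hcf_ne hsubset
  · obtain ⟨H, hHG, c, hc⟩ := Nat.sInf_mem hscf_ne
    set k := scfChromIndex G with hk
    apply Nat.sInf_le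
    refine ⟨fun f => if f ∈ H.edgeSet then (c f).castSucc else Fin.last k, ?_⟩
    intro e he
    obtain ⟨col, f, ⟨hfH, hfx, hfc⟩, huniq⟩ := hc e he
    refine ⟨col.castSucc, f, ⟨SimpleGraph.edgeSet_mono hHG hfH, hfx, by simp [hfH, hfc]; rfl⟩, ?_⟩
    rintro g ⟨hgG, hgx, hgc⟩
    by_cases hgH : g ∈ H.edgeSet
    · simp only [hgH, if_pos] at hgc
      exact huniq g ⟨hgH, hgx, Fin.castSucc_injective _ hgc⟩
    · simp only [hgH, if_neg, not_false_iff] at hgc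
      exact absurd hgc.symm (Fin.castSucc_lt_last col).ne
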